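/- Let p, q, r ∈ ℝ², set m = q − p, and assume det(q, m) > 0, det(r − p, m) < 0 and det(r, m) < 0, where det(x, y) = x₁y₂ − x₂y₁. Let A(z) = z + (det(z, p − q)/det(q, p − q))·(p − q) be the shear map sending q to p and fixing pointwise the line through the origin parallel to m (note det(q, p − q) ≠ 0 under the hypotheses). Let Δ(T) be the area of the triangle with vertices p, q, r and Δ(T′) the area of the triangle with vertices p, A(r), r, where the area of a triangle with vertices x, y, z is |det(y − x, z − x)|/2. Then Δ(T′) < Δ(T) if and only if det(m, r + q) < 0. -/

import Mathlib

/-- The standard 2×2 determinant on `ℝ × ℝ`. -/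
noncomputable def det2 (x y : ℝ × ℝ) : ℝ := x.1 * y.2 - x.2 * y.1

/-- The shear map `A_{uv}(x) = x + (det(x, v−u)/det(u, v−u)) • (v−u)`. -/
noncomputable def shear (u v : ℝ × ℝ) (x : ℝ × ℝ) : ℝ × ℝ :=
  x + (det2 x (v - u) / det2 u (v - u)) • (v - u)

/-- The area `|det(y−x, z−x)|/2` of the triangle with vertices `x, y, z`. -/
noncomputable def tri (x y z : ℝ × ℝ) : ℝ := |det2 (y - x) (z - x)| / 2

/-- with `m = q − p`, `det(q, m) > 0`, `det(r − p, m) < 0`,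
`det(r, m) < 0`, and `A = A_{q,p}` the shear sending `q` to `p` and fixing the line
through the origin parallel to `m`, the area of the triangle `p, A(r), r` is smaller
than the area of the triangle `p, q, r` if and only if `det(m, r + q) < 0`. -/
theorem stmt_19 (p q r m : ℝ × ℝ) (hm : m = q - p)
    (h1 : 0 < det2 q m) (h2 : det2 (r - p) m < 0) (h3 : det2 r m < 0) :
    tri p (shear q p r) r < tri p q r ↔ det2 m (r + q) < 0 := by
  subst hm
  obtain ⟨p1, p2⟩ := p; obtain ⟨q1, q2⟩ := q; obtain ⟨r1, r2⟩ := r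
  simp only [det2, tri, shear, Prod.fst_sub, Prod.snd_sub, Prod.fst_add, Prod.snd_add,
    Prod.smul_fst, Prod.smul_snd, smul_eq_mul] at *
  have ha : (0:ℝ) < q1 * (q2 - p2) - q2 * (q1 - p1) := h1
  have ha' : q1 * (p2 - q2) - q2 * (p1 - q1) ≠ 0 := by nlinarith
  have hN1 : (r1 + (r1 * (p2 - q2) - r2 * (p1 - q1)) / (q1 * (p2 - q2) - q2 * (p1 - q1)) * (p1 - q1) - p1) * (r2 - p2) -
      (r2 + (r1 * (p2 - q2) - r2 * (p1 - q1)) / (q1 * (p2 - q2) - q2 * (p1 - q1)) * (p2 - q2) - p2) * (r1 - p1)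
      = (r1 * (q2 - p2) - r2 * (q1 - p1)) * ((r1 - p1) * (q2 - p2) - (r2 - p2) * (q1 - p1)) / (q1 * (q2 - p2) - q2 * (q1 - p1)) := by
    rw [eq_div_iff ha.ne', div_eq_mul_inv]
    linear_combination (-(r1 * (p2 - q2) - r2 * (p1 - q1)) * ((p1 - q1) * (r2 - p2) - (p2 - q2) * (r1 - p1))) * mul_inv_cancel₀ ha'
  rw [hN1, abs_of_pos (div_pos (mul_pos_of_neg_of_neg h3 h2) ha),
    abs_of_pos (by nlinarith : (0:ℝ) < (q1 - p1) * (r2 - p2) - (q2 - p2) * (r1 - p1)),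
    div_lt_div_iff₀ two_pos two_pos, div_mul_eq_mul_div, div_lt_iff₀ ha]
  constructor <;> intro h <;> nlinarith [mul_pos ha ha, h2, h3]
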